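/- Let k be a field, let d, n be integers with 1 ≤ n < d, let ζ ∈ k be a primitive d-th root of unity, and let m ≥ 2. Let V = (Fin (m−2) → k) × (Fin n → k) and let g : V → V be the k-linear automorphism which is the identity on the first factor and multiplication by ζ on the second factor. Then for every natural number s and every integer t with 0 < t < d − n, any ω ∈ ⋀^s V satisfying (⋀^s g)(ω) = ζ^{d−t} · ω is zero. -/

import Mathlib

open ExteriorAlgebra Polynomial

/-- A linear map `f : M →ₗ[k] N` sends the `s`-th exterior power of `M` into that of `N`. -/
theorem exteriorPower_map_mem {k : Type*} [Field k] {M N : Type*} [AddCommGroup M] [Module k M]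
    [AddCommGroup N] [Module k N] (s : ℕ) (f : M →ₗ[k] N) (x : ExteriorAlgebra k M)
    (hx : x ∈ ⋀[k]^s M) : ExteriorAlgebra.map f x ∈ ⋀[k]^s N := by
  have h : Submodule.map (ExteriorAlgebra.map f).toLinearMap (⋀[k]^s M) ≤ ⋀[k]^s N := by
    rw [Submodule.map_pow, ExteriorAlgebra.ι_range_map_map]
    exact pow_le_pow_left' (LinearMap.map_le_range) s
  exact h ⟨x, hx, rfl⟩

/-- The map `⋀^s f` induced on `s`-th exterior powers by a linear map `f`. -/
noncomputable def exteriorPowerMap {k : Type*} [Field k] {M N : Type*} [AddCommGroup M]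
    [Module k M] [AddCommGroup N] [Module k N] (s : ℕ) (f : M →ₗ[k] N) :
    ⋀[k]^s M →ₗ[k] ⋀[k]^s N :=
  (ExteriorAlgebra.map f).toLinearMap.restrict (fun x hx => exteriorPower_map_mem s f x hx)

section Aux

variable {k : Type*} [Field k] {M : Type*} [AddCommGroup M] [Module k M]

/-- If more than `n` of the piecewise-chosen vectors lie in an `n`-dimensional space (via an
injective linear map), the wedge vanishes. -/
theorem aux_wedge_zero (s n : ℕ) (S : Finset (Fin s)) (a b : Fin s → M)
    (y : Fin s → (Fin n → k)) (f : (Fin n → k) →ₗ[k] M) (hf : Function.Injective f)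
    (hb : ∀ i, b i = f (y i)) (hcard : n < Sᶜ.card) :
    ιMulti k s (S.piecewise a b) = 0 := by
  apply AlternatingMap.map_linearDependent
  intro hli
  have hli2 : LinearIndependent k (fun i : (Sᶜ : Finset (Fin s)) => S.piecewise a b i.val) :=
    hli.comp _ Subtype.val_injective
  have heq : (fun i : (Sᶜ : Finset (Fin s)) => S.piecewise a b i.val)
      = f ∘ (fun i : (Sᶜ : Finset (Fin s)) => y i.val) := by
    funext i
    have hi : (i : Fin s) ∉ S := Finset.mem_compl.1 i.2
    simp [Finset.piecewise_eq_of_notMem _ _ _ hi, hb]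
  rw [heq] at hli2
  have hli3 := LinearIndependent.of_comp f hli2
  have := hli3.fintype_card_le_finrank
  simp only [Fintype.card_coe, Module.finrank_fintype_fun_eq_card, Fintype.card_fin] at this
  omega

end Aux

theorem eigenspace_exterior_power_vanish' (k : Type*) [Field k] (d n : ℕ)
    (hn : 1 ≤ n) (hnd : n < d) (ζ : k) (hζ : IsPrimitiveRoot ζ d) (m : ℕ) (hm : 2 ≤ m)
    (g : ((Fin (m - 2) → k) × (Fin n → k)) →ₗ[k] ((Fin (m - 2) → k) × (Fin n → k)))
    (hg : g = LinearMap.prodMap (LinearMap.id) (ζ • LinearMap.id))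
    (s : ℕ) (t : ℕ) (ht0 : 0 < t) (htd : t < d - n)
    (x : ExteriorAlgebra k ((Fin (m - 2) → k) × (Fin n → k)))
    (hxm : x ∈ ⋀[k]^s ((Fin (m - 2) → k) × (Fin n → k)))
    (hx : ExteriorAlgebra.map g x = ζ ^ (d - t) • x) :
    x = 0 := by
  set V := (Fin (m - 2) → k) × (Fin n → k)
  set B : Module.End k (ExteriorAlgebra k V) := (ExteriorAlgebra.map g).toLinearMap with hB
  set P : k[X] := ∏ j ∈ Finset.range (n + 1), (X - C (ζ ^ j)) with hP
  -- Step 1: aeval B P kills the s-th exterior power.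
  have key : ∀ z ∈ ⋀[k]^s V, Polynomial.aeval B P z = 0 := by
    intro z hz
    rw [← ιMulti_span_fixedDegree] at hz
    induction hz using Submodule.span_induction with
    | mem z hz =>
      obtain ⟨v, rfl⟩ := hz
      set a : Fin s → V := fun i => ((v i).1, 0) with ha
      set b : Fin s → V := fun i => (0, (v i).2) with hb
      have hv : v = a + b := by funext i; simp [ha, hb]
      rw [show (ιMulti k s) v = (ιMulti k s).toMultilinearMap v from rfl, hv,
        MultilinearMap.map_add_univ, map_sum]
      refine Finset.sum_eq_zero fun S _ => ?_
      by_cases hcard : n < Sᶜ.card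
      · rw [show ((ιMulti k s).toMultilinearMap (S.piecewise a b)
          : ExteriorAlgebra k V) = ιMulti k s (S.piecewise a b) from rfl]
        rw [aux_wedge_zero s n S a b (fun i => (v i).2) (LinearMap.inr k _ _)
          LinearMap.inr_injective (fun i => rfl) hcard, map_zero]
      · push_neg at hcard
        set w : ExteriorAlgebra k V := ιMulti k s (S.piecewise a b) with hw
        -- B acts on w by ζ ^ Sᶜ.card
        have hBw : B w = ζ ^ Sᶜ.card • w := by
          have h1 : B w = ιMulti k s (g ∘ S.piecewise a b) := map_apply_ιMulti g _
          have h2 : g ∘ S.piecewise a b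
              = fun i => (S.piecewise (fun _ => (1 : k)) (fun _ => ζ)) i • S.piecewise a b i := by
            funext i
            simp only [Function.comp_apply]
            by_cases hi : i ∈ S
            · rw [Finset.piecewise_eq_of_mem _ _ _ hi, Finset.piecewise_eq_of_mem _ _ _ hi,
                one_smul, hg]
              show ((v i).1, ζ • (0 : Fin n → k)) = ((v i).1, (0 : Fin n → k))
              rw [smul_zero]
            · rw [Finset.piecewise_eq_of_notMem _ _ _ hi,
                Finset.piecewise_eq_of_notMem _ _ _ hi, hg]
              show ((0 : Fin (m - 2) → k), ζ • (v i).2) = ζ • ((0 : Fin (m - 2) → k), (v i).2)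
              rw [Prod.smul_mk, smul_zero]
          have h3 : ιMulti k s
              (fun i => (S.piecewise (fun _ => (1 : k)) (fun _ => ζ)) i • S.piecewise a b i)
              = (∏ i, (S.piecewise (fun _ => (1 : k)) (fun _ => ζ)) i) • ιMulti k s (S.piecewise a b) :=
            MultilinearMap.map_smul_univ _ _ _
          rw [h1, h2, h3]
          congr 1
          rw [Finset.prod_piecewise]
          simp [Finset.compl_eq_univ_sdiff]
        have hmem : Sᶜ.card ∈ Finset.range (n + 1) := Finset.mem_range.2 (by omega)
        calc Polynomial.aeval B P w
            = (Polynomial.aeval B ((∏ j ∈ (Finset.range (n + 1)).erase Sᶜ.card,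
                (X - C (ζ ^ j))) * (X - C (ζ ^ Sᶜ.card)))) w := by
              rw [hP, Finset.prod_erase_mul _ _ hmem]
          _ = 0 := by
              rw [map_mul, Module.End.mul_apply]
              have : (Polynomial.aeval B (X - C (ζ ^ Sᶜ.card))) w = 0 := by
                simp only [map_sub, aeval_X, aeval_C, LinearMap.sub_apply,
                  Module.algebraMap_end_apply, hBw, sub_self]
              rw [this, map_zero]
    | zero => simp
    | add _ _ _ _ h1 h2 => rw [map_add, h1, h2, add_zero]
    | smul c _ _ h1 => rw [map_smul, h1, smul_zero]
  -- Step 2: x is an eigenvector with eigenvalue not a root of P.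
  by_contra hx0
  have hev : B.HasEigenvector (ζ ^ (d - t)) x :=
    ⟨Module.End.mem_eigenspace_iff.2 hx, hx0⟩
  have h0 := key x hxm
  rw [Module.End.aeval_apply_of_hasEigenvector hev] at h0
  have hPne : P.eval (ζ ^ (d - t)) ≠ 0 := by
    rw [hP, Polynomial.eval_prod]
    apply Finset.prod_ne_zero_iff.2
    intro j hj
    simp only [eval_sub, eval_X, eval_C, sub_ne_zero]
    intro habs
    have hj' : j < n + 1 := Finset.mem_range.1 hj
    have := hζ.pow_inj (by omega : d - t < d) (by omega : j < d) habs
    omega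
  exact hx0 (by simpa [smul_eq_zero, hPne] using h0)

/-- For `1 ≤ n < d`, `ζ` a primitive `d`-th root of unity, `m ≥ 2`, `g = id ⊕ (ζ • id)` on
`V = k^{m-2} × k^n`, and `0 < t < d - n`: every element of `⋀^s V` on which `⋀^s g` acts by
`ζ^{d-t}` vanishes.  This is `(Λ^s(1^{⊕ m-2} ⊕ χ^{⊕ n}) ⊗ χ^t)^{μ_d} = 0`. -/
theorem eigenspace_exterior_power_vanish (k : Type*) [Field k] (d n : ℕ)
    (hn : 1 ≤ n) (hnd : n < d) (ζ : k) (hζ : IsPrimitiveRoot ζ d) (m : ℕ) (hm : 2 ≤ m)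
    (g : ((Fin (m - 2) → k) × (Fin n → k)) →ₗ[k] ((Fin (m - 2) → k) × (Fin n → k)))
    (hg : g = LinearMap.prodMap (LinearMap.id) (ζ • LinearMap.id))
    (s : ℕ) (t : ℕ) (ht0 : 0 < t) (htd : t < d - n)
    (ω : ⋀[k]^s ((Fin (m - 2) → k) × (Fin n → k)))
    (hω : exteriorPowerMap s g ω = ζ ^ (d - t) • ω) :
    ω = 0 := by
  have hcoe : ExteriorAlgebra.map g (ω : ExteriorAlgebra k _) = ζ ^ (d - t) • (ω : ExteriorAlgebra k _) := by
    have := congrArg (Subtype.val) hω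
    exact this
  have := eigenspace_exterior_power_vanish' k d n hn hnd ζ hζ m hm g hg s t ht0 htd ω ω.2 hcoe
  exact Subtype.ext this
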